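/- The reduction homomorphism Sp(2g,ℤ) → Sp(2g,𝔽₂) is surjective. -/

import Mathlib

open Matrix
set_option linter.unusedSectionVars false
set_option linter.unnecessarySeqFocus false
set_option linter.unusedTactic false
set_option maxHeartbeats 1000000

/-- The standard symplectic form matrix `J = [[0, I], [-I, 0]]`. -/
def Jmat (g : ℕ) (R : Type*) [CommRing R] :
    Matrix (Fin g ⊕ Fin g) (Fin g ⊕ Fin g) R :=
  Matrix.fromBlocks 0 1 (-1) 0

namespace SpLift

variable {R : Type*} [CommRing R] {g : ℕ} {m n o p : Type*} [Fintype m] [Fintype n] [Fintype o]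

/-- the symplectic form -/
def om (g : ℕ) (R : Type*) [CommRing R] (x y : Fin g ⊕ Fin g → R) : R :=
  x ⬝ᵥ ((Jmat g R) *ᵥ y)

lemma Jmul_inl (x : Fin g ⊕ Fin g → R) (a : Fin g) :
    ((Jmat g R) *ᵥ x) (Sum.inl a) = x (Sum.inr a) := by
  simp [Jmat, mulVec, dotProduct, Fintype.sum_sum_type, Matrix.one_apply, ite_mul]

lemma Jmul_inr (x : Fin g ⊕ Fin g → R) (a : Fin g) :
    ((Jmat g R) *ᵥ x) (Sum.inr a) = -x (Sum.inl a) := by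
  simp [Jmat, mulVec, dotProduct, Fintype.sum_sum_type, Matrix.one_apply, ite_mul]

lemma om_eq (x y : Fin g ⊕ Fin g → R) :
    om g R x y = (∑ a, x (Sum.inl a) * y (Sum.inr a)) - ∑ a, x (Sum.inr a) * y (Sum.inl a) := by
  simp [om, dotProduct, Fintype.sum_sum_type, Jmul_inl, Jmul_inr, mul_neg,
    Finset.sum_neg_distrib, sub_eq_add_neg]

lemma om_self (x : Fin g ⊕ Fin g → R) : om g R x x = 0 := by
  simp [om_eq, mul_comm]


lemma vmv_mul (a : m → R) (b : n → R) (M : Matrix n o R) :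
    vecMulVec a b * M = vecMulVec a (b ᵥ* M) := by
  ext i j
  simp [vecMulVec_apply, mul_apply, vecMul, dotProduct, Finset.mul_sum, mul_assoc]

lemma mul_vmv (a : n → R) (b : o → R) (M : Matrix m n R) :
    M * vecMulVec a b = vecMulVec (M *ᵥ a) b := by
  ext i j
  simp only [vecMulVec_apply, mul_apply, mulVec, dotProduct, Finset.sum_mul, mul_assoc]
  try refine Finset.sum_congr rfl fun x _ => by ring

lemma vmv_mul_vmv (a : m → R) (b : n → R) (c : n → R) (d : p → R) :
    vecMulVec a b * vecMulVec c d = (b ⬝ᵥ c) • vecMulVec a d := by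
  ext i j
  simp only [vecMulVec_apply, mul_apply, dotProduct, Matrix.smul_apply, Finset.sum_mul, smul_eq_mul,
    Finset.mul_sum]
  try refine Finset.sum_congr rfl fun x _ => by ring

lemma vmv_transpose (a : m → R) (b : n → R) : (vecMulVec a b)ᵀ = vecMulVec b a := by
  ext i j; simp [vecMulVec_apply, mul_comm]

lemma neg_vmv (a : m → R) (b : n → R) : vecMulVec a (-b) = -vecMulVec a b := by
  ext i j; simp [vecMulVec_apply]


lemma J_transpose : (Jmat g R)ᵀ = -(Jmat g R) := by
  simp [Jmat, Matrix.fromBlocks_transpose]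
  ext (i|i) (j|j) <;> simp [Matrix.fromBlocks]

/-- symplectic predicate -/
def IsSymp (g : ℕ) (R : Type*) [CommRing R] (X : Matrix (Fin g ⊕ Fin g) (Fin g ⊕ Fin g) R) : Prop :=
  Xᵀ * Jmat g R * X = Jmat g R

/-- transvection matrix -/
def Tv (u : Fin g ⊕ Fin g → R) : Matrix (Fin g ⊕ Fin g) (Fin g ⊕ Fin g) R :=
  1 + vecMulVec u ((Jmat g R) *ᵥ u)

lemma vecMul_J (u : Fin g ⊕ Fin g → R) : u ᵥ* (Jmat g R) = -((Jmat g R) *ᵥ u) := by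
  have : u ᵥ* ((Jmat g R)ᵀ)ᵀ = (Jmat g R)ᵀ *ᵥ u := vecMul_transpose _ _
  rw [transpose_transpose] at this
  rw [this, J_transpose, neg_mulVec]

lemma Tv_symp (u : Fin g ⊕ Fin g → R) : IsSymp g R (Tv u) := by
  set J := Jmat g R with hJ
  set w := J *ᵥ u with hw
  have hwu : w ⬝ᵥ u = 0 := by
    rw [dotProduct_comm]
    exact om_self u
  unfold IsSymp Tv
  rw [transpose_add, transpose_one, vmv_transpose, ← hw]
  rw [add_mul, one_mul, mul_add, mul_one, add_mul]
  rw [vmv_mul, vecMul_J, neg_vmv, ← hw, mul_vmv, ← hw]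
  rw [neg_mul, vmv_mul_vmv, hwu, zero_smul, neg_zero]
  abel

lemma Tv_mulVec (u x : Fin g ⊕ Fin g → R) :
    Tv u *ᵥ x = x + om g R x u • u := by
  funext i
  rw [Tv, add_mulVec, one_mulVec]
  simp only [Pi.add_apply, Pi.smul_apply, smul_eq_mul]
  congr 1
  simp only [mulVec, dotProduct, vecMulVec_apply, om, Jmat]
  rw [Finset.sum_mul]
  refine Finset.sum_congr rfl fun j _ => by ring

lemma om_add_left (x y z : Fin g ⊕ Fin g → R) :
    om g R (x + y) z = om g R x z + om g R y z := by
  simp [om, add_dotProduct]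
lemma om_add_right (x y z : Fin g ⊕ Fin g → R) :
    om g R x (y + z) = om g R x y + om g R x z := by
  simp [om, mulVec_add, dotProduct_add]
lemma om_skew (x y : Fin g ⊕ Fin g → R) : om g R y x = -om g R x y := by
  have h := om_self (g := g) (x + y)
  rw [om_add_left, om_add_right, om_add_right, om_self, om_self] at h
  linear_combination h

-- symplectic matrices preserve om
lemma IsSymp.om_mulVec {X : Matrix (Fin g ⊕ Fin g) (Fin g ⊕ Fin g) R}
    (hX : IsSymp g R X) (x y : Fin g ⊕ Fin g → R) :
    om g R (X *ᵥ x) (X *ᵥ y) = om g R x y := by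
  unfold om
  rw [mulVec_mulVec, ← vecMul_transpose, ← dotProduct_mulVec, mulVec_mulVec,
    ← Matrix.mul_assoc, hX]

lemma IsSymp.mul {X Y : Matrix (Fin g ⊕ Fin g) (Fin g ⊕ Fin g) R}
    (hX : IsSymp g R X) (hY : IsSymp g R Y) : IsSymp g R (X * Y) := by
  unfold IsSymp at *
  rw [transpose_mul]
  calc Yᵀ * Xᵀ * (Jmat g R) * (X * Y) = Yᵀ * (Xᵀ * Jmat g R * X) * Y := by
        noncomm_ring
    _ = Jmat g R := by rw [hX, hY]

lemma IsSymp.one : IsSymp g R 1 := by simp [IsSymp]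

/-- liftability -/
def Liftable (M : Matrix (Fin g ⊕ Fin g) (Fin g ⊕ Fin g) (ZMod 2)) : Prop :=
  ∃ X : Matrix (Fin g ⊕ Fin g) (Fin g ⊕ Fin g) ℤ,
    IsSymp g ℤ X ∧ X.map (Int.cast : ℤ → ZMod 2) = M

lemma map_J : (Jmat g ℤ).map (Int.cast : ℤ → ZMod 2) = Jmat g (ZMod 2) := by
  ext (i|i) (j|j) <;> simp [Jmat, Matrix.map_apply, Matrix.one_apply, apply_ite]

lemma map_symp {X : Matrix (Fin g ⊕ Fin g) (Fin g ⊕ Fin g) ℤ} (hX : IsSymp g ℤ X) :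
    IsSymp g (ZMod 2) (X.map (Int.cast : ℤ → ZMod 2)) := by
  unfold IsSymp at *
  have : (Xᵀ * Jmat g ℤ * X).map (Int.castRingHom (ZMod 2)) =
      (Jmat g ℤ).map (Int.castRingHom (ZMod 2)) := by rw [hX]
  rw [Matrix.map_mul, Matrix.map_mul] at this
  have ht : (Xᵀ).map (Int.castRingHom (ZMod 2)) = (X.map (Int.cast : ℤ → ZMod 2))ᵀ := by
    rw [Matrix.transpose_map]; rfl
  rw [ht] at this
  rw [show ((Jmat g ℤ).map (Int.castRingHom (ZMod 2)) : Matrix _ _ (ZMod 2)) =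
      Jmat g (ZMod 2) from map_J] at this
  exact this

lemma Liftable.symp {M : Matrix (Fin g ⊕ Fin g) (Fin g ⊕ Fin g) (ZMod 2)} (h : Liftable M) :
    IsSymp g (ZMod 2) M := by
  obtain ⟨X, hX, rfl⟩ := h
  exact map_symp hX

lemma Liftable.one : Liftable (g := g) 1 :=
  ⟨1, IsSymp.one, by simp [Matrix.map_one]⟩

lemma Liftable.mul {M N : Matrix (Fin g ⊕ Fin g) (Fin g ⊕ Fin g) (ZMod 2)}
    (hM : Liftable M) (hN : Liftable N) : Liftable (M * N) := by
  obtain ⟨X, hX, rfl⟩ := hM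
  obtain ⟨Y, hY, rfl⟩ := hN
  refine ⟨X * Y, hX.mul hY, ?_⟩
  show (X * Y).map (⇑(Int.castRingHom (ZMod 2))) = _
  rw [Matrix.map_mul]
  rfl

lemma liftable_Tv (u : Fin g ⊕ Fin g → ZMod 2) : Liftable (Tv u) := by
  refine ⟨Tv (fun i => ((u i).val : ℤ)), Tv_symp _, ?_⟩
  have hu : ∀ i, (((u i).val : ℕ) : ZMod 2) = u i := by
    intro i
    simp [ZMod.natCast_val, ZMod.cast_id]
  ext i j
  simp only [SpLift.Tv, Matrix.map_apply, Matrix.add_apply, vecMulVec_apply]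
  push_cast
  congr 1
  · simp [Matrix.one_apply, apply_ite (Int.cast : ℤ → ZMod 2)]
  · congr 1
    · exact hu i
    · simp only [mulVec, dotProduct]
      push_cast
      refine Finset.sum_congr rfl fun k _ => ?_
      have h1 : ((Jmat g ℤ j k : ℤ) : ZMod 2) = Jmat g (ZMod 2) j k := by
        rw [← map_J]; rfl
      rw [h1, hu k]



lemma J_mul_J : Jmat g R * Jmat g R = -1 := by
  rw [Jmat, Matrix.fromBlocks_multiply]
  ext (i|i) (j|j) <;>
    simp [Matrix.fromBlocks, Matrix.one_apply, apply_ite (Neg.neg : R → R)]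

lemma symp_inv {X : Matrix (Fin g ⊕ Fin g) (Fin g ⊕ Fin g) R} (hX : IsSymp g R X) :
    ∃ Y, IsSymp g R Y ∧ Y * X = 1 ∧ X * Y = 1 := by
  have hYX : (-(Jmat g R * Xᵀ * Jmat g R)) * X = 1 := by
    calc (-(Jmat g R * Xᵀ * Jmat g R)) * X
        = -(Jmat g R * (Xᵀ * Jmat g R * X)) := by noncomm_ring
      _ = -(Jmat g R * Jmat g R) := by rw [hX]
      _ = 1 := by rw [J_mul_J]; simp
  have hXY : X * (-(Jmat g R * Xᵀ * Jmat g R)) = 1 := by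
    rw [mul_eq_one_comm] at hYX
    exact hYX
  refine ⟨-(Jmat g R * Xᵀ * Jmat g R), ?_, hYX, hXY⟩
  set Y := -(Jmat g R * Xᵀ * Jmat g R) with hY
  unfold IsSymp at *
  calc Yᵀ * Jmat g R * Y = Yᵀ * (Xᵀ * Jmat g R * X) * Y := by rw [hX]
    _ = (X * Y)ᵀ * Jmat g R * (X * Y) := by rw [transpose_mul]; noncomm_ring
    _ = Jmat g R := by rw [hXY]; simp


lemma liftable_cancel {A M : Matrix (Fin g ⊕ Fin g) (Fin g ⊕ Fin g) (ZMod 2)}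
    (hA : Liftable A) (hAM : Liftable (A * M)) : Liftable M := by
  obtain ⟨X, hX, hXm⟩ := hA
  obtain ⟨Y, hY, hYm⟩ := hAM
  obtain ⟨Xi, hXi, hXiX, hXXi⟩ := symp_inv hX
  refine ⟨Xi * Y, hXi.mul hY, ?_⟩
  have hmapmul : ∀ (P Q : Matrix (Fin g ⊕ Fin g) (Fin g ⊕ Fin g) ℤ),
      (P * Q).map (Int.cast : ℤ → ZMod 2) = P.map Int.cast * Q.map Int.cast := by
    intro P Q
    show (P * Q).map (⇑(Int.castRingHom (ZMod 2))) = _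
    rw [Matrix.map_mul]
    rfl
  have h1 : (Xi.map (Int.cast : ℤ → ZMod 2)) * A = 1 := by
    rw [← hXm, ← hmapmul, hXiX]
    exact Matrix.map_one _ (by simp) (by simp)
  rw [hmapmul, hYm, ← Matrix.mul_assoc, h1, Matrix.one_mul]


lemma two_cases : ∀ a : ZMod 2, a = 0 ∨ a = 1 := by decide

lemma vadd_self (x : Fin g ⊕ Fin g → ZMod 2) : x + x = 0 := by
  funext i
  show x i + x i = 0
  have : ∀ a : ZMod 2, a + a = 0 := by decide
  exact this _

lemma om_zero_left (y : Fin g ⊕ Fin g → ZMod 2) : om g (ZMod 2) 0 y = 0 := by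
  simp [om_eq]

lemma move1 {x y : Fin g ⊕ Fin g → ZMod 2} (h : om g (ZMod 2) x y = 1) :
    Tv (x + y) *ᵥ x = y := by
  rw [Tv_mulVec, om_add_right, om_self, h, zero_add, one_smul, ← add_assoc, vadd_self, zero_add]

lemma fix1 {x v : Fin g ⊕ Fin g → ZMod 2} (h : om g (ZMod 2) x v = 0) :
    Tv v *ᵥ x = x := by
  rw [Tv_mulVec, h, zero_smul, add_zero]

lemma exists_om_one {x : Fin g ⊕ Fin g → ZMod 2} (hx : x ≠ 0) :
    ∃ z, om g (ZMod 2) x z = 1 := by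
  have h2 : ∀ a : ZMod 2, a ≠ 0 → a = 1 := by decide
  obtain ⟨i, hi⟩ := Function.ne_iff.mp hx
  have hxi : x i = 1 := h2 _ hi
  rcases i with a | a
  · refine ⟨Pi.single (Sum.inr a) 1, ?_⟩
    simp [om_eq, Pi.single_apply, Finset.sum_ite_eq', hxi]
  · refine ⟨Pi.single (Sum.inl a) 1, ?_⟩
    have hneg : (-1 : ZMod 2) = 1 := by decide
    simp [om_eq, Pi.single_apply, Finset.sum_ite_eq', hxi, hneg]

lemma exists_lift_mv {x y : Fin g ⊕ Fin g → ZMod 2} (hx : x ≠ 0) (hy : y ≠ 0) :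
    ∃ A, Liftable A ∧ A *ᵥ x = y := by
  rcases two_cases (om g (ZMod 2) x y) with h | h
  · by_cases hxy : x = y
    · exact ⟨1, Liftable.one, by rw [one_mulVec, hxy]⟩
    · obtain ⟨z1, hz1⟩ := exists_om_one hx
      obtain ⟨z2, hz2⟩ := exists_om_one hy
      have key : ∃ z, om g (ZMod 2) x z = 1 ∧ om g (ZMod 2) y z = 1 := by
        rcases two_cases (om g (ZMod 2) y z1) with h1 | h1
        · rcases two_cases (om g (ZMod 2) x z2) with h2 | h2
          · exact ⟨z1 + z2, by rw [om_add_right, hz1, h2, add_zero],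
              by rw [om_add_right, h1, hz2, zero_add]⟩
          · exact ⟨z2, h2, hz2⟩
        · exact ⟨z1, hz1, h1⟩
      obtain ⟨z, hxz, hyz⟩ := key
      have hzy : om g (ZMod 2) z y = 1 := by
        rw [om_skew, hyz]; decide
      refine ⟨Tv (z + y) * Tv (x + z), (liftable_Tv _).mul (liftable_Tv _), ?_⟩
      rw [← mulVec_mulVec, move1 hxz, move1 hzy]
  · exact ⟨Tv (x + y), liftable_Tv _, move1 h⟩

lemma exists_lift_pair {x1 x2 y1 y2 : Fin g ⊕ Fin g → ZMod 2}
    (hx : om g (ZMod 2) x1 x2 = 1) (hy : om g (ZMod 2) y1 y2 = 1) :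
    ∃ A, Liftable A ∧ A *ᵥ x1 = y1 ∧ A *ᵥ x2 = y2 := by
  have h10 : (1 : ZMod 2) ≠ 0 := by decide
  have hx1 : x1 ≠ 0 := by rintro rfl; rw [om_zero_left] at hx; exact h10 hx.symm
  have hy1 : y1 ≠ 0 := by rintro rfl; rw [om_zero_left] at hy; exact h10 hy.symm
  obtain ⟨A1, hA1, hA1x⟩ := exists_lift_mv hx1 hy1
  set x2' := A1 *ᵥ x2 with hx2'
  have hyx2' : om g (ZMod 2) y1 x2' = 1 := by
    rw [← hA1x, hx2', (hA1.symp).om_mulVec, hx]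
  have neg1 : (-1 : ZMod 2) = 1 := by decide
  have key : ∃ B, Liftable B ∧ B *ᵥ y1 = y1 ∧ B *ᵥ x2' = y2 := by
    rcases two_cases (om g (ZMod 2) x2' y2) with hc | hc
    · by_cases heq : x2' = y2
      · exact ⟨1, Liftable.one, by rw [one_mulVec], by rw [one_mulVec, heq]⟩
      · set c := y1 + y2 with hcdef
        have h1 : om g (ZMod 2) x2' c = 1 := by
          rw [hcdef, om_add_right, hc, add_zero, om_skew, hyx2', neg1]
        have h2 : om g (ZMod 2) c y2 = 1 := by
          rw [hcdef, om_add_left, om_self, hy, add_zero]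
        have f1 : om g (ZMod 2) y1 (x2' + c) = 0 := by
          rw [om_add_right, hcdef, om_add_right, om_self, hyx2', hy]
          decide
        have f2 : om g (ZMod 2) y1 (c + y2) = 0 := by
          rw [om_add_right, hcdef, om_add_right, om_self, hy]
          decide
        refine ⟨Tv (c + y2) * Tv (x2' + c), (liftable_Tv _).mul (liftable_Tv _), ?_, ?_⟩
        · rw [← mulVec_mulVec, fix1 f1, fix1 f2]
        · rw [← mulVec_mulVec, move1 h1, move1 h2]
    · refine ⟨Tv (x2' + y2), liftable_Tv _, ?_, move1 hc⟩
      refine fix1 ?_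
      rw [om_add_right, hyx2', hy]
      decide
  obtain ⟨B, hB, hBy, hBx⟩ := key
  refine ⟨B * A1, hB.mul hA1, ?_, ?_⟩
  · rw [← mulVec_mulVec, hA1x, hBy]
  · rw [← mulVec_mulVec, ← hx2', hBx]

lemma om_single_inr (v : Fin g ⊕ Fin g → R) (a : Fin g) :
    om g R v (Pi.single (Sum.inr a) 1) = v (Sum.inl a) := by
  simp [om_eq, Pi.single_apply, Finset.sum_ite_eq']

lemma om_single_inl (v : Fin g ⊕ Fin g → R) (a : Fin g) :
    om g R v (Pi.single (Sum.inl a) 1) = -v (Sum.inr a) := by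
  simp [om_eq, Pi.single_apply, Finset.sum_ite_eq']

/-- the splitting equivalence -/
def Ek (k : ℕ) : (Fin (k+1) ⊕ Fin (k+1)) ≃ ((Fin 1 ⊕ Fin 1) ⊕ (Fin k ⊕ Fin k)) where
  toFun := Sum.elim
    (fun i => Fin.cases (Sum.inl (Sum.inl 0)) (fun a => Sum.inr (Sum.inl a)) i)
    (fun i => Fin.cases (Sum.inl (Sum.inr 0)) (fun a => Sum.inr (Sum.inr a)) i)
  invFun := Sum.elim
    (Sum.elim (fun _ => Sum.inl 0) (fun _ => Sum.inr 0))
    (Sum.map Fin.succ Fin.succ)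
  left_inv := by
    rintro (i | i) <;> induction i using Fin.cases <;> simp
  right_inv := by
    rintro ((a | a) | (a | a)) <;> simp [Fin.eq_zero]

lemma JE (k : ℕ) :
    reindex (Ek k) (Ek k) (Jmat (k+1) R) =
      fromBlocks (Jmat 1 R) 0 0 (Jmat k R) := by
  ext (⟨a|a⟩|⟨a|a⟩) (⟨b|b⟩|⟨b|b⟩) <;>
    simp [reindex_apply, submatrix_apply, Ek, Jmat, Matrix.fromBlocks, Matrix.one_apply,
      Fin.eq_zero, Fin.succ_ne_zero, (Fin.succ_ne_zero _).symm,
      Fin.succ_inj]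

lemma reindex_mul_reindex {k : ℕ} (P Q : Matrix (Fin (k+1) ⊕ Fin (k+1)) (Fin (k+1) ⊕ Fin (k+1)) R) :
    reindex (Ek k) (Ek k) P * reindex (Ek k) (Ek k) Q = reindex (Ek k) (Ek k) (P * Q) := by
  simp only [reindex_apply]
  exact submatrix_mul_equiv P Q _ _ _

theorem main : ∀ (g : ℕ) (M : Matrix (Fin g ⊕ Fin g) (Fin g ⊕ Fin g) (ZMod 2)),
    IsSymp g (ZMod 2) M → Liftable M := by
  intro g
  induction g with
  | zero =>
    intro M _
    refine ⟨1, by simp [IsSymp], ?_⟩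
    ext (i | i) j <;> exact i.elim0
  | succ k IH =>
    intro M hM
    set e : Fin (k+1) ⊕ Fin (k+1) → ZMod 2 := Pi.single (Sum.inl 0) 1 with he
    set f : Fin (k+1) ⊕ Fin (k+1) → ZMod 2 := Pi.single (Sum.inr 0) 1 with hf
    have hef : om (k+1) (ZMod 2) e f = 1 := by
      rw [hf, om_single_inr, he, Pi.single_eq_same]
    have hMef : om (k+1) (ZMod 2) (M *ᵥ e) (M *ᵥ f) = 1 := by
      rw [hM.om_mulVec, hef]
    obtain ⟨A, hA, h1, h2⟩ := exists_lift_pair hMef hef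
    set N := A * M with hNdef
    have hN : IsSymp (k+1) (ZMod 2) N := hA.symp.mul hM
    have hNe : N *ᵥ e = e := by rw [hNdef, ← mulVec_mulVec, h1]
    have hNf : N *ᵥ f = f := by rw [hNdef, ← mulVec_mulVec, h2]
    -- column facts
    have colL : ∀ i, N i (Sum.inl 0) = e i := by
      intro i
      have h3 := congrFun hNe i
      rw [he, mulVec_single_one] at h3
      simp only [mul_one, col_apply] at h3
      rw [he]
      exact h3
    have colR : ∀ i, N i (Sum.inr 0) = f i := by
      intro i
      have h3 := congrFun hNf i
      rw [hf, mulVec_single_one] at h3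
      simp only [mul_one, col_apply] at h3
      rw [hf]
      exact h3
    -- row facts
    have rowL : ∀ j, N (Sum.inl 0) j
        = if (Sum.inl 0 : Fin (k+1) ⊕ Fin (k+1)) = j then 1 else 0 := by
      intro j
      have h3 : om (k+1) (ZMod 2) (N *ᵥ Pi.single j 1) f = om (k+1) (ZMod 2) (Pi.single j 1) f := by
        conv_lhs => rw [← hNf]
        rw [hN.om_mulVec]
      rw [hf, om_single_inr, om_single_inr, mulVec_single_one] at h3
      simp only [mul_one, Pi.single_apply, col_apply] at h3
      exact h3
    have rowR : ∀ j, N (Sum.inr 0) j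
        = if (Sum.inr 0 : Fin (k+1) ⊕ Fin (k+1)) = j then 1 else 0 := by
      intro j
      have h3 : om (k+1) (ZMod 2) (N *ᵥ Pi.single j 1) e = om (k+1) (ZMod 2) (Pi.single j 1) e := by
        conv_lhs => rw [← hNe]
        rw [hN.om_mulVec]
      rw [he, om_single_inl, om_single_inl, mulVec_single_one] at h3
      have h4 := neg_injective h3
      simp only [mul_one, Pi.single_apply, col_apply] at h4
      exact h4
    set N' := reindex (Ek k) (Ek k) N with hN'def
    set M' := N'.toBlocks₂₂ with hM'def
    have hsplit : N' = fromBlocks 1 0 0 M' := by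
      ext (⟨a|a⟩|p) (⟨b|b⟩|q) <;>
        simp only [hN'def, reindex_apply, submatrix_apply, Ek, Equiv.coe_fn_symm_mk,
          Sum.elim_inl, Sum.elim_inr, Sum.map_inl, Sum.map_inr, fromBlocks_apply₁₁,
          fromBlocks_apply₁₂, fromBlocks_apply₂₁, fromBlocks_apply₂₂, Matrix.zero_apply,
          Matrix.one_apply, hM'def, toBlocks₂₂] <;>
        first
          | (rw [rowL]; simp [Pi.single_apply, Fin.eq_zero a, Fin.eq_zero b])
          | (rw [rowR]; simp [Pi.single_apply, Fin.eq_zero a, Fin.eq_zero b])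
          | (rw [rowL]; rcases q with q | q <;>
              simp [(Fin.succ_ne_zero _).symm, Fin.succ_ne_zero])
          | (rw [rowR]; rcases q with q | q <;>
              simp [(Fin.succ_ne_zero _).symm, Fin.succ_ne_zero])
          | (rw [colL, he]; rcases p with p | p <;>
              simp [Pi.single_apply, Fin.succ_ne_zero])
          | (rw [colR, hf]; rcases p with p | p <;>
              simp [Pi.single_apply, Fin.succ_ne_zero])
          | rfl
    -- transfer symplecticity through the reindexing
    have hN'symp : N'ᵀ * fromBlocks (Jmat 1 (ZMod 2)) 0 0 (Jmat k (ZMod 2)) * N'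
        = fromBlocks (Jmat 1 (ZMod 2)) 0 0 (Jmat k (ZMod 2)) := by
      rw [← JE k, hN'def]
      have ht : ((reindex (Ek k) (Ek k)) N)ᵀ = (reindex (Ek k) (Ek k)) Nᵀ :=
        transpose_reindex _ _ _
      rw [ht, reindex_mul_reindex, reindex_mul_reindex]
      rw [show Nᵀ * Jmat (k+1) (ZMod 2) * N = Jmat (k+1) (ZMod 2) from hN]
    have hM'symp : IsSymp k (ZMod 2) M' := by
      rw [hsplit] at hN'symp
      rw [fromBlocks_transpose, fromBlocks_multiply, fromBlocks_multiply] at hN'symp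
      have h22 := congrArg Matrix.toBlocks₂₂ hN'symp
      simpa [Matrix.toBlocks_fromBlocks₂₂, IsSymp] using h22
    obtain ⟨X', hX'symp, hX'map⟩ := IH M' hM'symp
    set X := reindex (Ek k).symm (Ek k).symm
      (fromBlocks (1 : Matrix (Fin 1 ⊕ Fin 1) (Fin 1 ⊕ Fin 1) ℤ) 0 0 X') with hXdef
    have hback : reindex (Ek k) (Ek k) X
        = fromBlocks (1 : Matrix (Fin 1 ⊕ Fin 1) (Fin 1 ⊕ Fin 1) ℤ) 0 0 X' := by
      rw [hXdef]
      ext i j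
      simp [reindex_apply, submatrix_apply]
    have hXsymp : IsSymp (k+1) ℤ X := by
      unfold IsSymp
      have hinj : Function.Injective (reindex (Ek k) (Ek k) :
          Matrix (Fin (k+1) ⊕ Fin (k+1)) (Fin (k+1) ⊕ Fin (k+1)) ℤ → _) :=
        (reindex (Ek k) (Ek k)).injective
      apply hinj
      have ht : ((reindex (Ek k) (Ek k)) X)ᵀ = (reindex (Ek k) (Ek k)) Xᵀ :=
        transpose_reindex _ _ _
      rw [← reindex_mul_reindex, ← reindex_mul_reindex, ← ht, JE k, hback]
      rw [fromBlocks_transpose, fromBlocks_multiply, fromBlocks_multiply]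
      have h1 : (1 : Matrix (Fin 1 ⊕ Fin 1) (Fin 1 ⊕ Fin 1) ℤ)ᵀ = 1 := transpose_one
      simp only [h1, Matrix.one_mul, Matrix.mul_one, Matrix.mul_zero, Matrix.zero_mul,
        add_zero, zero_add, Matrix.transpose_zero]
      rw [show X'ᵀ * Jmat k ℤ * X' = Jmat k ℤ from hX'symp]
    have hXmap : X.map (Int.cast : ℤ → ZMod 2) = N := by
      have h5 : reindex (Ek k) (Ek k) (X.map (Int.cast : ℤ → ZMod 2))
          = (reindex (Ek k) (Ek k) X).map (Int.cast : ℤ → ZMod 2) := by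
        ext i j
        simp [reindex_apply, submatrix_apply]
      apply (reindex (Ek k) (Ek k)).injective
      rw [h5, hback, ← hN'def, hsplit]
      rw [show (fromBlocks (1 : Matrix (Fin 1 ⊕ Fin 1) (Fin 1 ⊕ Fin 1) ℤ) 0 0 X').map
        (Int.cast : ℤ → ZMod 2) = fromBlocks ((1 : Matrix (Fin 1 ⊕ Fin 1) (Fin 1 ⊕ Fin 1) ℤ).map
          (Int.cast : ℤ → ZMod 2)) ((0 : Matrix _ _ ℤ).map Int.cast)
          ((0 : Matrix _ _ ℤ).map Int.cast) (X'.map Int.cast) from fromBlocks_map _ _ _ _ _]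
      rw [hX'map]
      congr 1 <;> try (ext i j; simp [Matrix.one_apply, apply_ite (Int.cast : ℤ → ZMod 2)])
    have hNlift : Liftable N := ⟨X, hXsymp, hXmap⟩
    exact liftable_cancel hA (hNdef ▸ hNlift)


end SpLift

/-- The reduction map `Sp(2g,ℤ) → Sp(2g,𝔽₂)` is surjective: every symplectic matrix
over `𝔽₂` lifts to a symplectic integer matrix. -/
theorem stmt14 (g : ℕ) (hg : 1 ≤ g)
    (M : Matrix (Fin g ⊕ Fin g) (Fin g ⊕ Fin g) (ZMod 2))
    (hM : Mᵀ * Jmat g (ZMod 2) * M = Jmat g (ZMod 2)) :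
    ∃ X : Matrix (Fin g ⊕ Fin g) (Fin g ⊕ Fin g) ℤ,
      Xᵀ * Jmat g ℤ * X = Jmat g ℤ ∧ X.map (Int.cast : ℤ → ZMod 2) = M := by
  obtain ⟨X, hX, hm⟩ := SpLift.main g M hM
  exact ⟨X, hX, hm⟩
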